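/- For one-dimensional Gaussian blurring mean-shift with variance recursion σ_{s+1} = σ_s · σ_s²/(σ_s² + τ²), and nonblurring recursion σ'_{s+1} = σ'_s · σ_0²/(σ_0² + τ²) with σ'_0 = σ_0, one has σ_s ≤ σ'_s for all s, with strict inequality for s ≥ 2 (assuming σ_0, τ > 0). In particular the blurring process shrinks at least as fast as the nonblurring one. -/

import Mathlib

theorem stmt_11 (τ σ₀ : ℝ) (hτ : 0 < τ) (hσ₀ : 0 < σ₀)
    (σ σ' : ℕ → ℝ) (h0 : σ 0 = σ₀) (h0' : σ' 0 = σ₀)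
    (hrec : ∀ s, σ (s + 1) = (σ s) ^ 3 / ((σ s) ^ 2 + τ ^ 2))
    (hrec' : ∀ s, σ' (s + 1) = σ' s * (σ₀ ^ 2 / (σ₀ ^ 2 + τ ^ 2))) :
    (∀ s, σ s ≤ σ' s) ∧ (∀ s, 2 ≤ s → σ s < σ' s) := by
  have hτ2 : 0 < τ ^ 2 := by positivity
  have hpos : ∀ s, 0 < σ s := by
    intro s
    induction s with
    | zero => rw [h0]; exact hσ₀
    | succ n ih =>
      rw [hrec]
      positivity
  have hpos' : ∀ s, 0 < σ' s := by
    intro s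
    induction s with
    | zero => rw [h0']; exact hσ₀
    | succ n ih =>
      rw [hrec']
      positivity
  have hr1 : σ₀ ^ 2 / (σ₀ ^ 2 + τ ^ 2) < 1 := by
    rw [div_lt_one (by positivity)]; linarith
  have hle' : ∀ s, σ' s ≤ σ₀ := by
    intro s
    induction s with
    | zero => rw [h0']
    | succ n ih =>
      rw [hrec']
      nlinarith [hpos' n]
  have hle : ∀ s, σ s ≤ σ' s := by
    intro s
    induction s with
    | zero => rw [h0, h0']
    | succ n ih =>
      have h1 : 0 < σ n := hpos n
      have h2 : σ n ≤ σ₀ := le_trans ih (hle' n)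
      rw [hrec, hrec']
      have hmono : (σ n) ^ 2 / ((σ n) ^ 2 + τ ^ 2) ≤ σ₀ ^ 2 / (σ₀ ^ 2 + τ ^ 2) := by
        rw [div_le_div_iff₀ (by positivity) (by positivity)]
        nlinarith [mul_le_mul_of_nonneg_right (by nlinarith : (σ n)^2 ≤ σ₀^2) hτ2.le]
      have heq : (σ n) ^ 3 / ((σ n) ^ 2 + τ ^ 2)
          = σ n * ((σ n) ^ 2 / ((σ n) ^ 2 + τ ^ 2)) := by
        field_simp
      rw [heq]
      have : σ n * ((σ n) ^ 2 / ((σ n) ^ 2 + τ ^ 2)) ≤ σ' n * (σ₀ ^ 2 / (σ₀ ^ 2 + τ ^ 2)) := by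
        apply mul_le_mul ih hmono (by positivity) (le_of_lt (hpos' n))
      exact this
  refine ⟨hle, ?_⟩
  have h2lt : σ 2 < σ' 2 := by
    have h1eq : σ 1 = σ' 1 := by
      rw [hrec, hrec', h0, h0']
      field_simp
    have h1lt : σ 1 < σ₀ := by
      rw [hrec, h0]
      rw [div_lt_iff₀ (by positivity)]
      nlinarith
    have h1pos : 0 < σ 1 := hpos 1
    rw [hrec, hrec', ← h1eq]
    have heq : (σ 1) ^ 3 / ((σ 1) ^ 2 + τ ^ 2)
        = σ 1 * ((σ 1) ^ 2 / ((σ 1) ^ 2 + τ ^ 2)) := by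
      field_simp
    rw [heq]
    have hmono : (σ 1) ^ 2 / ((σ 1) ^ 2 + τ ^ 2) < σ₀ ^ 2 / (σ₀ ^ 2 + τ ^ 2) := by
      rw [div_lt_div_iff₀ (by positivity) (by positivity)]
      nlinarith [mul_lt_mul_of_pos_right (by nlinarith : (σ 1)^2 < σ₀^2) hτ2]
    exact mul_lt_mul_of_pos_left hmono h1pos
  intro s hs
  obtain ⟨k, rfl⟩ : ∃ k, s = 2 + k := ⟨s - 2, by omega⟩
  clear hs
  induction k with
  | zero => exact h2lt
  | succ n ih =>
    have hn : 2 + (n + 1) = (2 + n) + 1 := by ring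
    rw [hn, hrec, hrec']
    set m := 2 + n
    have h1 : 0 < σ m := hpos m
    have h2 : σ m ≤ σ₀ := le_trans (hle m) (hle' m)
    have hmono : (σ m) ^ 2 / ((σ m) ^ 2 + τ ^ 2) ≤ σ₀ ^ 2 / (σ₀ ^ 2 + τ ^ 2) := by
      rw [div_le_div_iff₀ (by positivity) (by positivity)]
      nlinarith [mul_le_mul_of_nonneg_right (by nlinarith : (σ m)^2 ≤ σ₀^2) hτ2.le]
    have heq : (σ m) ^ 3 / ((σ m) ^ 2 + τ ^ 2)
        = σ m * ((σ m) ^ 2 / ((σ m) ^ 2 + τ ^ 2)) := by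
      field_simp
    rw [heq]
    calc σ m * ((σ m) ^ 2 / ((σ m) ^ 2 + τ ^ 2))
        ≤ σ m * (σ₀ ^ 2 / (σ₀ ^ 2 + τ ^ 2)) := by
          exact mul_le_mul_of_nonneg_left hmono (le_of_lt h1)
      _ < σ' m * (σ₀ ^ 2 / (σ₀ ^ 2 + τ ^ 2)) := by
          exact mul_lt_mul_of_pos_right ih (by positivity)
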